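/- The number of Callan permutations of [n+k] equals ∑_{m=0}^{min(n,k)} (m!)² S(n+1,m+1) S(k+1,m+1), where a Callan permutation of [n+k] is a permutation in which every maximal substring whose entries all lie in {1,...,n} or all lie in {n+1,...,n+k} is increasing. -/

import Mathlib

/-- Stirling numbers of the second kind: `stirling n r` is the number of
partitions of an `n`-element set into `r` non-empty blocks. -/
def stirling : ℕ → ℕ → ℕ
  | 0, 0 => 1
  | 0, _ + 1 => 0
  | _ + 1, 0 => 0
  | n + 1, r + 1 => (r + 1) * stirling n (r + 1) + stirling n r

/-- A permutation `π` of `[n+k]` is a Callan permutation if every maximal substring of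
consecutive entries all lying in `N = {1,…,n}` or all lying in `K = {n+1,…,n+k}` is
increasing; equivalently, whenever two consecutive entries lie on the same side, they
increase. Here `Fin (n + k)` encodes `[n+k]`, with `x.1 < n` meaning `x ∈ N`. -/
def IsCallan (n k : ℕ) (π : Equiv.Perm (Fin (n + k))) : Prop :=
  ∀ i : Fin (n + k - 1),
    (((π ⟨i.1, by have := i.isLt; omega⟩).1 < n) ↔
      ((π ⟨i.1 + 1, by have := i.isLt; omega⟩).1 < n)) →
    π ⟨i.1, by have := i.isLt; omega⟩ < π ⟨i.1 + 1, by have := i.isLt; omega⟩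

namespace CallanAux

def Hts (n m : ℕ) (f : Fin n → Fin (m+1)) : Prop := ∀ j, j ≠ 0 → ∃ i, f i = j
instance (n m : ℕ) : DecidablePred (Hts n m) := fun _ => by unfold Hts; infer_instance
noncomputable def SC (n m : ℕ) : ℕ := Nat.card {f : Fin n → Fin (m+1) // Hts n m f}

lemma Hts.le {n m : ℕ} {f : Fin n → Fin (m+1)} (h : Hts n m f) : m ≤ n := by
  classical
  have hinj : Function.Injective (fun j : Fin m => (h j.succ (Fin.succ_ne_zero j)).choose) := by
    intro a b hab
    have ha := (h a.succ (Fin.succ_ne_zero a)).choose_spec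
    have hb := (h b.succ (Fin.succ_ne_zero b)).choose_spec
    simp only at hab
    have : a.succ = b.succ := by rw [← ha, ← hb, hab]
    exact Fin.succ_injective _ this
  simpa using Fintype.card_le_of_injective _ hinj

lemma SC_zero (n : ℕ) : SC n 0 = 1 := by
  have h : ∀ f : Fin n → Fin 1, Hts n 0 f := by
    intro f j hj; exact absurd (Fin.fin_one_eq_zero j) hj
  rw [SC, Nat.card_congr (Equiv.subtypeUnivEquiv h), Nat.card_eq_fintype_card]
  simp

lemma SC_zero_succ (m : ℕ) : SC 0 (m + 1) = 0 := by
  rw [SC, Nat.card_eq_zero]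
  left
  constructor
  rintro ⟨f, hf⟩
  obtain ⟨i, -⟩ := hf 1 (by simp)
  exact i.elim0

lemma stirling_one (n : ℕ) : stirling n 1 = if n = 0 then 0 else 1 := by
  induction n with
  | zero => simp [stirling]
  | succ n ih =>
    have h0 : stirling n 0 = if n = 0 then 1 else 0 := by
      cases n <;> simp [stirling]
    simp only [stirling, ih, h0]
    cases n <;> simp [stirling]


section rec
variable {n m : ℕ}

lemma vne0 {f : Fin (n+1) → Fin (m+2)} (hf : Hts (n+1) (m+1) f)
    (h : ¬ Hts n (m+1) (f ∘ Fin.castSucc)) : f (Fin.last n) ≠ 0 ∧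
      ∀ i : Fin n, f (Fin.castSucc i) ≠ f (Fin.last n) := by
  simp only [Hts, not_forall] at h
  obtain ⟨j, hj, hmiss⟩ := h
  push_neg at hmiss
  obtain ⟨i0, hi0⟩ := hf j hj
  have hlast : f (Fin.last n) = j := by
    rcases Fin.eq_castSucc_or_eq_last i0 with ⟨i, rfl⟩ | rfl
    · exact absurd hi0 (hmiss i)
    · exact hi0
  refine ⟨by rw [hlast]; exact hj, fun i hi => ?_⟩
  rw [hlast] at hi
  exact hmiss i hi

lemma hts_small {f : Fin (n+1) → Fin (m+2)} (hf : Hts (n+1) (m+1) f)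
    (h : ¬ Hts n (m+1) (f ∘ Fin.castSucc)) :
    Hts n m (fun i => (finSuccAboveEquiv (f (Fin.last n))).symm
      ⟨f (Fin.castSucc i), (vne0 hf h).2 i⟩) := by
  intro j hj
  have hw : (f (Fin.last n)).succAbove j ≠ 0 := by
    intro h0
    have h00 : (f (Fin.last n)).succAbove 0 = 0 := Fin.succAbove_ne_zero_zero (vne0 hf h).1
    exact hj ((f (Fin.last n)).succAbove_right_injective (h0.trans h00.symm))
  obtain ⟨i0, hi0⟩ := hf ((f (Fin.last n)).succAbove j) hw
  rcases Fin.eq_castSucc_or_eq_last i0 with ⟨i, rfl⟩ | rfl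
  · refine ⟨i, ?_⟩
    rw [Equiv.symm_apply_eq]
    exact Subtype.ext hi0
  · exact absurd hi0 (Ne.symm (Fin.succAbove_ne _ j))

lemma hts_snoc_inl {g : Fin n → Fin (m+2)} (hg : Hts n (m+1) g) (v : Fin (m+2)) :
    Hts (n+1) (m+1) (Fin.snoc g v) := by
  intro j hj
  obtain ⟨i, hi⟩ := hg j hj
  exact ⟨Fin.castSucc i, by simpa using hi⟩

lemma hts_snoc_inr {g : Fin n → Fin (m+1)} (hg : Hts n m g) (v : Fin (m+2)) (hv : v ≠ 0) :
    Hts (n+1) (m+1) (Fin.snoc (fun i => v.succAbove (g i)) v) := by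
  intro j hj
  rcases eq_or_ne j v with rfl | hjv
  · exact ⟨Fin.last n, by simp⟩
  · obtain ⟨j0, rfl⟩ : ∃ j0, v.succAbove j0 = j := by
      rcases Fin.exists_succAbove_eq hjv with ⟨j0, hj0⟩
      exact ⟨j0, hj0⟩
    have hj0 : j0 ≠ 0 := by
      rintro rfl
      exact hj (Fin.succAbove_ne_zero_zero hv)
    obtain ⟨i, hi⟩ := hg j0 hj0
    exact ⟨Fin.castSucc i, by simp [hi]⟩

noncomputable def htsEquiv (n m : ℕ) :
    {f : Fin (n+1) → Fin (m+2) // Hts (n+1) (m+1) f} ≃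
      ({f : Fin n → Fin (m+2) // Hts n (m+1) f} × Fin (m+2)) ⊕
      ({f : Fin n → Fin (m+1) // Hts n m f} × {j : Fin (m+2) // j ≠ 0}) where
  toFun F :=
    if h : Hts n (m+1) (F.1 ∘ Fin.castSucc) then .inl (⟨_, h⟩, F.1 (Fin.last n))
    else .inr (⟨_, hts_small F.2 h⟩, ⟨F.1 (Fin.last n), (vne0 F.2 h).1⟩)
  invFun x :=
    match x with
    | .inl (⟨g, hg⟩, v) => ⟨Fin.snoc g v, hts_snoc_inl hg v⟩
    | .inr (⟨g, hg⟩, ⟨v, hv⟩) => ⟨Fin.snoc (fun i => v.succAbove (g i)) v, hts_snoc_inr hg v hv⟩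
  left_inv := by
    rintro ⟨f, hf⟩
    by_cases h : Hts n (m+1) (f ∘ Fin.castSucc)
    · simp only [dif_pos h]
      exact Subtype.ext (Fin.snoc_init_self f)
    · simp only [dif_neg h]
      have hc : (fun i => (f (Fin.last n)).succAbove ((finSuccAboveEquiv (f (Fin.last n))).symm
          ⟨f (Fin.castSucc i), (vne0 hf h).2 i⟩)) = fun i => f (Fin.castSucc i) := by
        funext i
        exact congrArg Subtype.val (Equiv.apply_symm_apply (finSuccAboveEquiv (f (Fin.last n)))
          ⟨f (Fin.castSucc i), (vne0 hf h).2 i⟩)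
      have key : (Fin.snoc (fun i => (f (Fin.last n)).succAbove
          ((finSuccAboveEquiv (f (Fin.last n))).symm
            ⟨f (Fin.castSucc i), (vne0 hf h).2 i⟩)) (f (Fin.last n)) :
          Fin (n+1) → Fin (m+2)) = f := by
        rw [hc]
        exact Fin.snoc_init_self f
      exact Subtype.ext key
  right_inv := by
    rintro (⟨⟨g, hg⟩, v⟩ | ⟨⟨g, hg⟩, v, hv⟩)
    · have hcomp : (Fin.snoc g v : Fin (n+1) → Fin (m+2)) ∘ Fin.castSucc = g := by
        funext i; simp
      simp only
      rw [dif_pos (show Hts n (m+1) ((Fin.snoc g v : Fin (n+1) → Fin (m+2)) ∘ Fin.castSucc) by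
        rw [hcomp]; exact hg)]
      simp only [Sum.inl.injEq, Prod.mk.injEq]
      exact ⟨Subtype.ext hcomp, by simp⟩
    · set f : Fin (n+1) → Fin (m+2) := Fin.snoc (fun i => v.succAbove (g i)) v with hfdef
      have hcomp : ∀ i, f (Fin.castSucc i) = v.succAbove (g i) := by
        intro i; simp [hfdef]
      have hlast : f (Fin.last n) = v := by simp [hfdef]
      have hneg : ¬ Hts n (m+1) (f ∘ Fin.castSucc) := by
        intro hH
        obtain ⟨i, hi⟩ := hH v hv
        rw [Function.comp_apply, hcomp] at hi
        exact Fin.succAbove_ne v (g i) hi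
      simp only
      rw [dif_neg hneg]
      simp only [Sum.inr.injEq, Prod.mk.injEq]
      refine ⟨Subtype.ext ?_, Subtype.ext hlast⟩
      funext i
      rw [Equiv.symm_apply_eq]
      refine Subtype.ext ?_
      show f (Fin.castSucc i) = (f (Fin.last n)).succAbove (g i)
      rw [hcomp, hlast]

lemma SC_succ_succ (n m : ℕ) : SC (n+1) (m+1) = SC n (m+1) * (m+2) + SC n m * (m+1) := by
  rw [SC, Nat.card_congr (htsEquiv n m), Nat.card_sum, Nat.card_prod, Nat.card_prod]
  have h1 : Nat.card (Fin (m+2)) = m + 2 := by simp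
  have h2 : Nat.card {j : Fin (m+2) // j ≠ 0} = m + 1 := by
    rw [← Nat.card_congr (finSuccAboveEquiv (0 : Fin (m+2)))]
    simp
  rw [h1, h2, SC, SC]

lemma SC_eq (n : ℕ) : ∀ m, SC n m = Nat.factorial m * stirling (n+1) (m+1) := by
  induction n with
  | zero =>
    intro m
    cases m with
    | zero => rw [SC_zero]; simp [stirling]
    | succ m => rw [SC_zero_succ]; simp [stirling]
  | succ n ih =>
    intro m
    cases m with
    | zero => rw [SC_zero]; simp [stirling_one]
    | succ m =>
      rw [SC_succ_succ, ih, ih]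
      show _ = Nat.factorial (m+1) * stirling (n+1+1) (m+1+1)
      rw [show stirling (n+1+1) (m+1+1) = (m+2) * stirling (n+1) (m+2) + stirling (n+1) (m+1)
        from rfl]
      rw [Nat.factorial_succ]
      ring
end rec

open List

variable {n k : ℕ}

def CRel (n k : ℕ) (a b : Fin (n+k)) : Prop := ((a.1 < n) ↔ (b.1 < n)) → a < b

def CallanL (n k : ℕ) (l : List (Fin (n+k))) : Prop := l.Chain' (CRel n k)

def NBlk (n k : ℕ) (l : List (Fin (n+k))) : Prop := (∀ x ∈ l, x.1 < n) ∧ l.Chain' (· < ·)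
def KBlk (n k : ℕ) (l : List (Fin (n+k))) : Prop := (∀ x ∈ l, ¬ x.1 < n) ∧ l.Chain' (· < ·)

abbrev LL (n k : ℕ) := List (Fin (n+k))

def pat (A0 : LL n k) (ps : List (LL n k × LL n k)) (B0 : LL n k) : LL n k :=
  A0 ++ (ps.map fun p => p.1 ++ p.2).flatten ++ B0

def GoodPs (n k : ℕ) (ps : List (LL n k × LL n k)) : Prop :=
  ∀ p ∈ ps, KBlk n k p.1 ∧ p.1 ≠ [] ∧ NBlk n k p.2 ∧ p.2 ≠ []

def Good (n k : ℕ) (A0 : LL n k) (ps : List (LL n k × LL n k)) (B0 : LL n k) : Prop :=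
  NBlk n k A0 ∧ GoodPs n k ps ∧ KBlk n k B0

lemma pat_cons (A0 B A : LL n k) (ps : List (LL n k × LL n k)) (B0 : LL n k) :
    pat A0 ((B, A) :: ps) B0 = A0 ++ (B ++ pat A ps B0) := by
  simp [pat]

lemma chain'_of_mem {α : Type*} {R S : α → α → Prop} {l : List α}
    (h : ∀ a ∈ l, ∀ b ∈ l, R a b → S a b) (hc : l.Chain' R) : l.Chain' S := by
  have hc := List.isChain_iff_getElem.mp hc
  refine List.isChain_iff_getElem.mpr ?_
  intro i hi
  exact h _ (List.getElem_mem _) _ (List.getElem_mem _) (hc i hi)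

lemma NBlk.callan {l : LL n k} (h : NBlk n k l) : CallanL n k l :=
  chain'_of_mem (fun _ _ _ _ hab _ => hab) h.2

lemma KBlk.callan {l : LL n k} (h : KBlk n k l) : CallanL n k l :=
  chain'_of_mem (fun _ _ _ _ hab _ => hab) h.2

lemma head?_mem {α : Type*} {l : List α} {x : α} (h : l.head? = some x) : x ∈ l := by
  cases l with
  | nil => simp at h
  | cons a t => simp at h; simp [h]

lemma getLast?_mem' {α : Type*} {l : List α} {x : α} (h : l.getLast? = some x) : x ∈ l :=
  List.mem_of_mem_getLast? h

/-- head of the "K-first" part of a pattern is on the K side. -/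
lemma headQ {ps : List (LL n k × LL n k)} {B0 : LL n k} (hps : GoodPs n k ps)
    (hB0 : KBlk n k B0) :
    ∀ x, ((ps.map fun p => p.1 ++ p.2).flatten ++ B0).head? = some x → ¬ x.1 < n := by
  intro x hx
  cases ps with
  | nil =>
    simp only [map_nil, flatten_nil, nil_append] at hx
    exact hB0.1 x (head?_mem hx)
  | cons p t =>
    obtain ⟨B, A⟩ := p
    obtain ⟨hK, hne, -, -⟩ := hps (B, A) (mem_cons_self)
    obtain ⟨b, B', rfl⟩ := List.exists_cons_of_ne_nil hne
    simp only [map_cons, flatten_cons, cons_append, append_assoc, head?_cons] at hx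
    obtain rfl : b = x := by injection hx
    exact hK.1 b (mem_cons_self)

lemma good_callan {A0 : LL n k} {ps : List (LL n k × LL n k)} {B0 : LL n k}
    (h : Good n k A0 ps B0) : CallanL n k (pat A0 ps B0) := by
  obtain ⟨hA0, hps, hB0⟩ := h
  induction ps generalizing A0 with
  | nil =>
    have : pat A0 [] B0 = A0 ++ B0 := by simp [pat]
    rw [CallanL, this]
    refine List.isChain_append.mpr ⟨hA0.callan, hB0.callan, ?_⟩
    intro x hx y hy hiff
    exact absurd (hiff.mp (hA0.1 x (getLast?_mem' hx))) (hB0.1 y (head?_mem hy))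
  | cons p t ih =>
    obtain ⟨B, A⟩ := p
    obtain ⟨hK, hBne, hN, hAne⟩ := hps (B, A) (mem_cons_self)
    have hpst : GoodPs n k t := fun q hq => hps q (mem_cons_of_mem _ hq)
    rw [CallanL, pat_cons]
    refine List.isChain_append.mpr ⟨hA0.callan, ?_, ?_⟩
    · refine List.isChain_append.mpr ⟨hK.callan, ih hN hpst, ?_⟩
      · intro x hx y hy hiff
        obtain ⟨a, A', rfl⟩ := List.exists_cons_of_ne_nil hAne
        have hya : y = a := by
          simp [pat, head?_cons] at hy; exact hy.symm
        have : y.1 < n := hya ▸ hN.1 a (mem_cons_self)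
        exact absurd (hiff.mpr this) (hK.1 x (getLast?_mem' hx))
    · intro x hx y hy hiff
      obtain ⟨b, B', rfl⟩ := List.exists_cons_of_ne_nil hBne
      have hyb : y = b := by simp [head?_cons] at hy; exact hy.symm
      have : ¬ y.1 < n := hyb ▸ hK.1 b (mem_cons_self)
      exact absurd (hiff.mp (hA0.1 x (getLast?_mem' hx))) this


/-! ### Parsing a Callan list into a pattern -/

lemma takeWhile_ne_nil_of_head {α : Type*} {p : α → Bool} {l : List α} {x : α}
    (hx : l.head? = some x) (hpx : p x = true) : l.takeWhile p ≠ [] := by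
  cases l with
  | nil => simp at hx
  | cons a t =>
    obtain rfl : a = x := by injection hx
    rw [List.takeWhile_cons_of_pos hpx]
    simp

lemma parseQ : ∀ (N : ℕ) (l : LL n k), l.length ≤ N → CallanL n k l →
    (∀ x, l.head? = some x → ¬ x.1 < n) →
    ∃ ps B0, GoodPs n k ps ∧ KBlk n k B0 ∧ l = (ps.map fun p => p.1 ++ p.2).flatten ++ B0 := by
  intro N
  induction N with
  | zero =>
    intro l hlen _ _
    have : l = [] := List.eq_nil_of_length_eq_zero (Nat.le_zero.mp hlen)
    subst this
    exact ⟨[], [], by simp [GoodPs], ⟨by simp, List.isChain_nil⟩, by simp⟩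
  | succ N ih =>
    intro l hlen hc hhead
    rcases eq_or_ne l [] with rfl | hlne
    · exact ⟨[], [], by simp [GoodPs], ⟨by simp, List.isChain_nil⟩, by simp⟩
    · set pK : Fin (n+k) → Bool := fun x => !decide (x.1 < n) with hpK
      set B := l.takeWhile pK with hBdef
      set l₂ := l.dropWhile pK with hl₂def
      have hx0 : ∃ x, l.head? = some x := by
        cases l with
        | nil => exact absurd rfl hlne
        | cons a t => exact ⟨a, rfl⟩
      obtain ⟨x0, hx0⟩ := hx0
      have hBne : B ≠ [] :=
        takeWhile_ne_nil_of_head hx0 (by simp [hpK, hhead x0 hx0])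
      have hlBl₂ : B ++ l₂ = l := List.takeWhile_append_dropWhile (p := pK) (l := l)
      have hBK : ∀ x ∈ B, ¬ x.1 < n := by
        intro x hx
        have := List.mem_takeWhile_imp hx
        simpa [hpK] using this
      have hBchain : B.Chain' (· < ·) := by
        refine chain'_of_mem ?_ (hc.prefix (List.takeWhile_prefix _))
        intro a ha b hb hab
        exact hab (iff_of_false (hBK a ha) (hBK b hb))
      have hl₂c : CallanL n k l₂ := hc.suffix (List.dropWhile_suffix _)
      rcases eq_or_ne l₂ [] with hl₂nil | hl₂ne
      · refine ⟨[], B, by simp [GoodPs], ⟨hBK, hBchain⟩, ?_⟩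
        simp [← hlBl₂, hl₂nil]
      · have hhead₂ : ∀ x, l₂.head? = some x → x.1 < n := by
          intro x hx
          have hne' : List.dropWhile pK l ≠ [] := hl₂ne
          have h1 := List.head_dropWhile_not pK hne'
          have hxh : (List.dropWhile pK l).head hne' = x :=
            (List.head_eq_iff_head?_eq_some hne').mpr hx
          rw [hxh] at h1
          simpa [hpK] using h1
        set pN : Fin (n+k) → Bool := fun x => decide (x.1 < n) with hpN
        set A := l₂.takeWhile pN with hAdef
        set l₃ := l₂.dropWhile pN with hl₃def
        obtain ⟨x1, hx1⟩ : ∃ x, l₂.head? = some x := by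
          cases hl : l₂ with
          | nil => exact absurd hl hl₂ne
          | cons a t => exact ⟨a, rfl⟩
        have hAne : A ≠ [] := takeWhile_ne_nil_of_head hx1 (by simp [hpN, hhead₂ x1 hx1])
        have hlAl₃ : A ++ l₃ = l₂ := List.takeWhile_append_dropWhile (p := pN) (l := l₂)
        have hAN : ∀ x ∈ A, x.1 < n := by
          intro x hx
          have := List.mem_takeWhile_imp hx
          simpa [hpN] using this
        have hAchain : A.Chain' (· < ·) := by
          refine chain'_of_mem ?_ (hl₂c.prefix (List.takeWhile_prefix _))
          intro a ha b hb hab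
          exact hab (iff_of_true (hAN a ha) (hAN b hb))
        have hl₃c : CallanL n k l₃ := hl₂c.suffix (List.dropWhile_suffix _)
        have hhead₃ : ∀ x, l₃.head? = some x → ¬ x.1 < n := by
          intro x hx
          have hl₃ne : l₃ ≠ [] := by
            intro h0
            rw [h0] at hx
            simp at hx
          have hne' : List.dropWhile pN l₂ ≠ [] := hl₃ne
          have h1 := List.head_dropWhile_not pN hne'
          have hxh : (List.dropWhile pN l₂).head hne' = x :=
            (List.head_eq_iff_head?_eq_some hne').mpr hx
          rw [hxh] at h1
          simpa [hpN] using h1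
        have hlen₃ : l₃.length ≤ N := by
          have h2 : l₂.length + B.length = l.length := by
            rw [← hlBl₂, List.length_append]; omega
          have hB1 : 1 ≤ B.length := by
            cases hB : B with
            | nil => exact absurd hB hBne
            | cons a t => simp
          have h3 : l₃.length + A.length = l₂.length := by
            rw [← hlAl₃, List.length_append]; omega
          omega
        obtain ⟨ps', B0, hps', hB0, hdec⟩ := ih l₃ hlen₃ hl₃c hhead₃
        refine ⟨(B, A) :: ps', B0, ?_, hB0, ?_⟩
        · intro p hp
          rcases List.mem_cons.mp hp with rfl | hp'
          · exact ⟨⟨hBK, hBchain⟩, hBne, ⟨hAN, hAchain⟩, hAne⟩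
          · exact hps' p hp'
        · rw [← hlBl₂, ← hlAl₃, hdec]
          simp [List.append_assoc]

lemma parse {l : LL n k} (hc : CallanL n k l) :
    ∃ A0 ps B0, Good n k A0 ps B0 ∧ l = pat A0 ps B0 := by
  set pN : Fin (n+k) → Bool := fun x => decide (x.1 < n) with hpN
  set A0 := l.takeWhile pN with hA0def
  set rest := l.dropWhile pN with hrestdef
  have hA0N : ∀ x ∈ A0, x.1 < n := by
    intro x hx
    have := List.mem_takeWhile_imp hx
    simpa [hpN] using this
  have hA0chain : A0.Chain' (· < ·) := by
    refine chain'_of_mem ?_ (hc.prefix (List.takeWhile_prefix _))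
    intro a ha b hb hab
    exact hab (iff_of_true (hA0N a ha) (hA0N b hb))
  have hrestc : CallanL n k rest := hc.suffix (List.dropWhile_suffix _)
  have hheadr : ∀ x, rest.head? = some x → ¬ x.1 < n := by
    intro x hx
    have hrne : rest ≠ [] := by
      intro h0
      rw [h0] at hx
      simp at hx
    have hne' : List.dropWhile pN l ≠ [] := hrne
    have h1 := List.head_dropWhile_not pN hne'
    have hxh : (List.dropWhile pN l).head hne' = x :=
      (List.head_eq_iff_head?_eq_some hne').mpr hx
    rw [hxh] at h1
    simpa [hpN] using h1
  obtain ⟨ps, B0, hps, hB0, hdec⟩ := parseQ rest.length rest le_rfl hrestc hheadr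
  refine ⟨A0, ps, B0, ⟨⟨hA0N, hA0chain⟩, hps, hB0⟩, ?_⟩
  rw [pat, List.append_assoc, ← hdec]
  exact (List.takeWhile_append_dropWhile (p := pN) (l := l)).symm


/-! ### Uniqueness of the pattern decomposition -/

lemma takeWhile_spec {α : Type*} (p : α → Bool) :
    ∀ (A rest : List α), (∀ x ∈ A, p x = true) →
    (∀ x, rest.head? = some x → p x = false) →
    (A ++ rest).takeWhile p = A ∧ (A ++ rest).dropWhile p = rest := by
  intro A
  induction A with
  | nil =>
    intro rest _ hrest
    cases rest with
    | nil => simp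
    | cons y t =>
      have := hrest y rfl
      simp only [nil_append]
      rw [List.takeWhile_cons_of_neg (by simp [this]), List.dropWhile_cons_of_neg (by simp [this])]
      simp
  | cons a A ih =>
    intro rest hA hrest
    have hpa : p a = true := hA a (mem_cons_self)
    have := ih rest (fun x hx => hA x (mem_cons_of_mem _ hx)) hrest
    simp only [cons_append]
    rw [List.takeWhile_cons_of_pos hpa, List.dropWhile_cons_of_pos hpa]
    exact ⟨by rw [this.1], this.2⟩

/-- head of `A ++ rest` is N-side when `A` is a nonempty N-block. -/
lemma headN {A rest : LL n k} (hA : ∀ x ∈ A, x.1 < n) (hAne : A ≠ []) :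
    ∀ x, (A ++ rest).head? = some x → x.1 < n := by
  intro x hx
  obtain ⟨a, A', rfl⟩ := List.exists_cons_of_ne_nil hAne
  obtain rfl : a = x := by simpa using hx
  exact hA a (mem_cons_self)

lemma patQ_inj : ∀ (ps ps' : List (LL n k × LL n k)) (B0 B0' : LL n k),
    GoodPs n k ps → GoodPs n k ps' → KBlk n k B0 → KBlk n k B0' →
    (ps.map fun p => p.1 ++ p.2).flatten ++ B0 = (ps'.map fun p => p.1 ++ p.2).flatten ++ B0' →
    ps = ps' ∧ B0 = B0' := by
  intro ps
  induction ps with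
  | nil =>
    intro ps' B0 B0' _ hps' hB0 _ h
    cases ps' with
    | nil => simpa using h
    | cons p t =>
      obtain ⟨B', A'⟩ := p
      obtain ⟨hK', hBne', hN', hAne'⟩ := hps' (B', A') (mem_cons_self)
      obtain ⟨a, At, rfl⟩ := List.exists_cons_of_ne_nil hAne'
      exfalso
      have hamem : a ∈ (B0 : LL n k) := by
        simp only [map_nil, flatten_nil, nil_append] at h
        rw [h]
        simp
      exact hB0.1 a hamem (hN'.1 a (mem_cons_self))
  | cons p t ih =>
    intro ps' B0 B0' hps hps' hB0 hB0' h
    obtain ⟨B, A⟩ := p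
    obtain ⟨hK, hBne, hN, hAne⟩ := hps (B, A) (mem_cons_self)
    cases ps' with
    | nil =>
      exfalso
      obtain ⟨a, At, rfl⟩ := List.exists_cons_of_ne_nil hAne
      have hamem : a ∈ (B0' : LL n k) := by
        simp only [map_nil, flatten_nil, nil_append] at h
        rw [← h]
        simp
      exact hB0'.1 a hamem (hN.1 a (mem_cons_self))
    | cons p' t' =>
      obtain ⟨B', A'⟩ := p'
      obtain ⟨hK', hBne', hN', hAne'⟩ := hps' (B', A') (mem_cons_self)
      have hpst : GoodPs n k t := fun q hq => hps q (mem_cons_of_mem _ hq)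
      have hpst' : GoodPs n k t' := fun q hq => hps' q (mem_cons_of_mem _ hq)
      set pK : Fin (n+k) → Bool := fun x => !decide (x.1 < n) with hpK
      set pN : Fin (n+k) → Bool := fun x => decide (x.1 < n) with hpN
      have hshape : B ++ (A ++ ((t.map fun p => p.1 ++ p.2).flatten ++ B0)) =
          B' ++ (A' ++ ((t'.map fun p => p.1 ++ p.2).flatten ++ B0')) := by
        simpa [List.append_assoc] using h
      -- peel B and B'
      have hheadA : ∀ rest2 : LL n k, ∀ (A : LL n k), (∀ x ∈ A, x.1 < n) → A ≠ [] →
          ∀ x, (A ++ rest2).head? = some x → pK x = false := by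
        intro rest2 A2 hA2 hA2ne x hx
        simp [hpK, headN hA2 hA2ne x hx]
      have hBspec := takeWhile_spec pK B (A ++ ((t.map fun p => p.1 ++ p.2).flatten ++ B0))
        (fun x hx => by simp [hpK, hK.1 x hx]) (hheadA _ A hN.1 hAne)
      have hBspec' := takeWhile_spec pK B' (A' ++ ((t'.map fun p => p.1 ++ p.2).flatten ++ B0'))
        (fun x hx => by simp [hpK, hK'.1 x hx]) (hheadA _ A' hN'.1 hAne')
      have hBB : B = B' := by
        rw [← hBspec.1, ← hBspec'.1, hshape]
      have hrest : A ++ ((t.map fun p => p.1 ++ p.2).flatten ++ B0) =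
          A' ++ ((t'.map fun p => p.1 ++ p.2).flatten ++ B0') := by
        rw [← hBspec.2, ← hBspec'.2, hshape]
      -- peel A and A'
      have hAspec := takeWhile_spec pN A ((t.map fun p => p.1 ++ p.2).flatten ++ B0)
        (fun x hx => by simp [hpN, hN.1 x hx])
        (fun x hx => by simp [hpN, headQ hpst hB0 x hx])
      have hAspec' := takeWhile_spec pN A' ((t'.map fun p => p.1 ++ p.2).flatten ++ B0')
        (fun x hx => by simp [hpN, hN'.1 x hx])
        (fun x hx => by simp [hpN, headQ hpst' hB0' x hx])
      have hAA : A = A' := by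
        rw [← hAspec.1, ← hAspec'.1, hrest]
      have hrest2 : (t.map fun p => p.1 ++ p.2).flatten ++ B0 =
          (t'.map fun p => p.1 ++ p.2).flatten ++ B0' := by
        rw [← hAspec.2, ← hAspec'.2, hrest]
      obtain ⟨htt, hBB0⟩ := ih t' B0 B0' hpst hpst' hB0 hB0' hrest2
      exact ⟨by rw [hBB, hAA, htt], hBB0⟩

lemma pat_inj {A0 A0' : LL n k} {ps ps' : List (LL n k × LL n k)} {B0 B0' : LL n k}
    (hG : Good n k A0 ps B0) (hG' : Good n k A0' ps' B0')
    (h : pat A0 ps B0 = pat A0' ps' B0') : A0 = A0' ∧ ps = ps' ∧ B0 = B0' := by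
  obtain ⟨hA0, hps, hB0⟩ := hG
  obtain ⟨hA0', hps', hB0'⟩ := hG'
  set pN : Fin (n+k) → Bool := fun x => decide (x.1 < n) with hpN
  have hshape : A0 ++ ((ps.map fun p => p.1 ++ p.2).flatten ++ B0) =
      A0' ++ ((ps'.map fun p => p.1 ++ p.2).flatten ++ B0') := by
    simpa [pat, List.append_assoc] using h
  have hspec := takeWhile_spec pN A0 ((ps.map fun p => p.1 ++ p.2).flatten ++ B0)
    (fun x hx => by simp [hpN, hA0.1 x hx])
    (fun x hx => by simp [hpN, headQ hps hB0 x hx])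
  have hspec' := takeWhile_spec pN A0' ((ps'.map fun p => p.1 ++ p.2).flatten ++ B0')
    (fun x hx => by simp [hpN, hA0'.1 x hx])
    (fun x hx => by simp [hpN, headQ hps' hB0' x hx])
  have hA : A0 = A0' := by rw [← hspec.1, ← hspec'.1, hshape]
  have hrest : (ps.map fun p => p.1 ++ p.2).flatten ++ B0 =
      (ps'.map fun p => p.1 ++ p.2).flatten ++ B0' := by
    rw [← hspec.2, ← hspec'.2, hshape]
  obtain ⟨h1, h2⟩ := patQ_inj ps ps' B0 B0' hps hps' hB0 hB0' hrest
  exact ⟨hA, h1, h2⟩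


/-! ### Blocks from fiber functions, and reconstruction -/

instance {N : ℕ} : IsAntisymm (Fin N) (· < ·) :=
  ⟨fun _ _ h h' => absurd h' (asymm h)⟩

section blocks

variable {s m : ℕ}

def blkE (e : Fin s → Fin (n+k)) (f : Fin s → Fin (m+1)) (j : Fin (m+1)) : LL n k :=
  ((Finset.univ.filter (fun x => f x = j)).sort (· ≤ ·)).map e

lemma mem_blkE {e : Fin s → Fin (n+k)} {f : Fin s → Fin (m+1)} {j : Fin (m+1)} {z : Fin (n+k)} :
    z ∈ blkE e f j ↔ ∃ x, f x = j ∧ e x = z := by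
  simp [blkE, Finset.mem_sort, Finset.mem_filter]

lemma blkE_chain {e : Fin s → Fin (n+k)} (he : StrictMono e) (f : Fin s → Fin (m+1))
    (j : Fin (m+1)) : (blkE e f j).Chain' (· < ·) := by
  refine List.isChain_iff_pairwise.mpr ?_
  exact List.Pairwise.map e (fun a b h => he h) (Finset.sortedLT_sort _).pairwise

lemma blkE_nodup {e : Fin s → Fin (n+k)} (he : Function.Injective e) (f : Fin s → Fin (m+1))
    (j : Fin (m+1)) : (blkE e f j).Nodup :=
  (Finset.sort_nodup _ _).map he

lemma blkE_ne_nil {e : Fin s → Fin (n+k)} {f : Fin s → Fin (m+1)} {j : Fin (m+1)}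
    (h : ∃ x, f x = j) : blkE e f j ≠ [] := by
  obtain ⟨x, hx⟩ := h
  exact List.ne_nil_of_mem (mem_blkE.mpr ⟨x, hx, rfl⟩)

lemma blkE_length (e : Fin s → Fin (n+k)) (f : Fin s → Fin (m+1)) (j : Fin (m+1)) :
    (blkE e f j).length = (Finset.univ.filter (fun x => f x = j)).card := by
  simp [blkE]

lemma sum_blkE_length (e : Fin s → Fin (n+k)) (f : Fin s → Fin (m+1)) :
    ∑ j : Fin (m+1), (blkE e f j).length = s := by
  have := Finset.card_eq_sum_card_fiberwise (f := f) (s := Finset.univ) (t := Finset.univ)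
    (fun x _ => Finset.mem_univ (f x))
  simp only [blkE_length]
  simpa using this.symm

lemma blkE_inj {e : Fin s → Fin (n+k)} (he : Function.Injective e)
    {f f' : Fin s → Fin (m+1)} (h : ∀ j, blkE e f j = blkE e f' j) : f = f' := by
  funext x
  have hx : e x ∈ blkE e f (f x) := mem_blkE.mpr ⟨x, rfl, rfl⟩
  rw [h] at hx
  obtain ⟨x', hx', hex⟩ := mem_blkE.mp hx
  obtain rfl := he hex
  exact hx'.symm

section reconstruct

variable {e : Fin s → Fin (n+k)} {Cs : List (LL n k)}
variable (hlen : Cs.length = m + 1)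
variable (hex : ∀ x : Fin s, ∃ C ∈ Cs, e x ∈ C)

/-- index of the block containing `e x`. -/
def idxF (hlen : Cs.length = m + 1) (hex : ∀ x : Fin s, ∃ C ∈ Cs, e x ∈ C)
    (x : Fin s) : Fin (m+1) :=
  ⟨Cs.findIdx (fun C => decide (e x ∈ C)), by
    rw [← hlen]
    refine List.findIdx_lt_length_of_exists ?_
    obtain ⟨C, hC, hxC⟩ := hex x
    exact ⟨C, hC, by simpa⟩⟩

lemma idxF_mem (x : Fin s) :
    e x ∈ Cs[(idxF hlen hex x).1]'(by rw [hlen]; exact (idxF hlen hex x).isLt) := by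
  have := List.findIdx_getElem (p := fun C => decide (e x ∈ C)) (xs := Cs)
    (w := by rw [hlen]; exact (idxF hlen hex x).isLt)
  exact of_decide_eq_true this

lemma idxF_eq_iff (hdisj : Cs.Pairwise List.Disjoint) (x : Fin s) (j : Fin (m+1)) :
    idxF hlen hex x = j ↔ e x ∈ Cs[j.1]'(by rw [hlen]; exact j.isLt) := by
  constructor
  · rintro rfl
    exact idxF_mem hlen hex x
  · intro hj
    by_contra hne
    have hne' : (idxF hlen hex x).1 ≠ j.1 := fun h => hne (Fin.ext h)
    have hmem := idxF_mem hlen hex x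
    have hd := List.pairwise_iff_getElem.mp hdisj
    rcases Nat.lt_or_ge (idxF hlen hex x).1 j.1 with hlt | hge
    · exact hd _ _ _ _ hlt hmem hj
    · exact hd _ _ _ _ (by omega) hj hmem

lemma idxF_hts (hdisj : Cs.Pairwise List.Disjoint)
    (hside : ∀ C ∈ Cs, ∀ z ∈ C, z ∈ Set.range e)
    (hne : ∀ j : Fin (m+1), j ≠ 0 → Cs[j.1]'(by rw [hlen]; exact j.isLt) ≠ []) :
    ∀ j : Fin (m+1), j ≠ 0 → ∃ x, idxF hlen hex x = j := by
  intro j hj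
  have hCne := hne j hj
  obtain ⟨z, Ct, hC⟩ := List.exists_cons_of_ne_nil hCne
  have hzC : z ∈ Cs[j.1]'(by rw [hlen]; exact j.isLt) := by rw [hC]; exact mem_cons_self
  obtain ⟨x, rfl⟩ := hside _ (List.getElem_mem _) z hzC
  exact ⟨x, (idxF_eq_iff hlen hex hdisj x j).mpr hzC⟩

lemma blkE_idxF (hdisj : Cs.Pairwise List.Disjoint)
    (hside : ∀ C ∈ Cs, ∀ z ∈ C, z ∈ Set.range e)
    (hnodupC : ∀ C ∈ Cs, C.Nodup) (hchainC : ∀ C ∈ Cs, C.Chain' (· < ·))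
    (he : StrictMono e) (j : Fin (m+1)) :
    blkE e (idxF hlen hex) j = Cs[j.1]'(by rw [hlen]; exact j.isLt) := by
  have hCmem : Cs[j.1]'(by rw [hlen]; exact j.isLt) ∈ Cs := List.getElem_mem _
  refine (fun hp h1 h2 => List.Perm.eq_of_pairwise' (r := fun a b => a < b) h1 h2 hp) ?_ ?_ ?_
  · refine List.perm_of_nodup_nodup_toFinset_eq (blkE_nodup he.injective _ _)
      (hnodupC _ hCmem) ?_
    ext z
    simp only [List.mem_toFinset]
    rw [mem_blkE]
    constructor
    · rintro ⟨x, hx, rfl⟩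
      exact (idxF_eq_iff hlen hex hdisj x j).mp hx
    · intro hz
      obtain ⟨x, rfl⟩ := hside _ hCmem z hz
      exact ⟨x, (idxF_eq_iff hlen hex hdisj x j).mpr hz, rfl⟩
  · exact List.isChain_iff_pairwise.mp (blkE_chain he _ _)
  · exact List.isChain_iff_pairwise.mp (hchainC _ hCmem)

end reconstruct
end blocks

/-! ### Concrete sides -/

lemma range_castAdd {z : Fin (n+k)} : z ∈ Set.range (Fin.castAdd k : Fin n → Fin (n+k)) ↔ z.1 < n := by
  constructor
  · rintro ⟨x, rfl⟩
    exact x.isLt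
  · intro hz
    exact ⟨⟨z.1, hz⟩, Fin.ext rfl⟩

lemma range_natAdd {z : Fin (n+k)} : z ∈ Set.range (Fin.natAdd n : Fin k → Fin (n+k)) ↔ ¬ z.1 < n := by
  constructor
  · rintro ⟨x, rfl⟩
    simp [Fin.natAdd]
  · intro hz
    refine ⟨⟨z.1 - n, by have := z.isLt; omega⟩, Fin.ext ?_⟩
    simp [Fin.natAdd]
    omega

lemma castAdd_strictMono : StrictMono (Fin.castAdd k : Fin n → Fin (n+k)) :=
  Fin.strictMono_castAdd k

lemma natAdd_strictMono : StrictMono (Fin.natAdd n : Fin k → Fin (n+k)) := by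
  intro a b hab
  simp only [Fin.lt_def, Fin.natAdd] at *
  omega


/-! ### The constructed list -/

section clistSec
variable {m : ℕ}

def prsL (n k m : ℕ) (f : Fin n → Fin (m+1)) (g : Fin k → Fin (m+1)) : List (LL n k × LL n k) :=
  (List.finRange m).map fun j => (blkE (Fin.natAdd n) g j.succ, blkE (Fin.castAdd k) f j.succ)

def clist (n k m : ℕ) (f : Fin n → Fin (m+1)) (g : Fin k → Fin (m+1)) : LL n k :=
  pat (blkE (Fin.castAdd k) f 0) (prsL n k m f g) (blkE (Fin.natAdd n) g 0)

lemma NBlk_blkE (f : Fin n → Fin (m+1)) (j : Fin (m+1)) :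
    NBlk n k (blkE (Fin.castAdd k) f j) := by
  refine ⟨?_, blkE_chain castAdd_strictMono f j⟩
  intro z hz
  obtain ⟨x, -, rfl⟩ := mem_blkE.mp hz
  exact x.isLt

lemma KBlk_blkE (g : Fin k → Fin (m+1)) (j : Fin (m+1)) :
    KBlk n k (blkE (Fin.natAdd n) g j) := by
  refine ⟨?_, blkE_chain natAdd_strictMono g j⟩
  intro z hz
  obtain ⟨x, -, rfl⟩ := mem_blkE.mp hz
  exact range_natAdd.mp ⟨x, rfl⟩

lemma good_clist {f : Fin n → Fin (m+1)} {g : Fin k → Fin (m+1)}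
    (hf : ∀ j : Fin (m+1), j ≠ 0 → ∃ x, f x = j) (hg : ∀ j : Fin (m+1), j ≠ 0 → ∃ x, g x = j) :
    Good n k (blkE (Fin.castAdd k) f 0) (prsL n k m f g) (blkE (Fin.natAdd n) g 0) := by
  refine ⟨NBlk_blkE f 0, ?_, KBlk_blkE g 0⟩
  intro p hp
  obtain ⟨j, -, rfl⟩ := List.mem_map.mp hp
  exact ⟨KBlk_blkE g _, blkE_ne_nil (hg j.succ (Fin.succ_ne_zero j)),
    NBlk_blkE f _, blkE_ne_nil (hf j.succ (Fin.succ_ne_zero j))⟩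

lemma clist_length (f : Fin n → Fin (m+1)) (g : Fin k → Fin (m+1)) :
    (clist n k m f g).length = n + k := by
  have hA := sum_blkE_length (Fin.castAdd k) f
  have hB := sum_blkE_length (Fin.natAdd n) g
  rw [Fin.sum_univ_succ] at hA hB
  have h1 : (clist n k m f g).length = (blkE (Fin.castAdd k) f 0).length +
      ((∑ j : Fin m, ((blkE (Fin.natAdd n) g j.succ).length +
        (blkE (Fin.castAdd k) f j.succ).length))) + (blkE (Fin.natAdd n) g 0).length := by
    simp only [clist, pat, prsL, List.length_append, List.length_flatten, List.map_map,
      Function.comp_def, Fin.sum_univ_def]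
  rw [Finset.sum_add_distrib] at h1
  omega

lemma disjE {s : ℕ} {e : Fin s → Fin (n+k)} (he : Function.Injective e)
    {f : Fin s → Fin (m+1)} {i j : Fin (m+1)} (hij : i ≠ j) :
    (blkE e f i).Disjoint (blkE e f j) := by
  intro z hz hz'
  obtain ⟨x, hx, rfl⟩ := mem_blkE.mp hz
  obtain ⟨x', hx', hexx⟩ := mem_blkE.mp hz'
  obtain rfl := he hexx
  exact hij (hx ▸ hx')

lemma disjNK {f : Fin n → Fin (m+1)} {g : Fin k → Fin (m+1)} {i j : Fin (m+1)} :
    (blkE (Fin.castAdd k) f i : LL n k).Disjoint (blkE (Fin.natAdd n) g j) := by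
  intro z hz hz'
  exact (KBlk_blkE g j).1 z hz' ((NBlk_blkE f i).1 z hz)

lemma clist_nodup (f : Fin n → Fin (m+1)) (g : Fin k → Fin (m+1)) :
    (clist n k m f g).Nodup := by
  have hmemI : ∀ z : Fin (n+k),
      z ∈ ((prsL n k m f g).map fun p => p.1 ++ p.2).flatten ↔
      ∃ j : Fin m, z ∈ blkE (Fin.natAdd n) g j.succ ∨ z ∈ blkE (Fin.castAdd k) f j.succ := by
    intro z
    simp [prsL, List.mem_flatten]
  rw [clist, pat, List.append_assoc, List.nodup_append']
  refine ⟨blkE_nodup castAdd_strictMono.injective f 0, ?_, ?_⟩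
  · rw [List.nodup_append']
    refine ⟨?_, blkE_nodup natAdd_strictMono.injective g 0, ?_⟩
    · rw [List.nodup_flatten]
      constructor
      · intro c hc
        obtain ⟨p, hp, rfl⟩ := List.mem_map.mp hc
        obtain ⟨j, -, rfl⟩ := List.mem_map.mp hp
        rw [List.nodup_append']
        exact ⟨blkE_nodup natAdd_strictMono.injective g _,
          blkE_nodup castAdd_strictMono.injective f _,
          fun z hz hz' => disjNK hz' hz⟩
      · rw [prsL, List.map_map, List.pairwise_map]
        refine List.Pairwise.imp ?_ (List.nodup_finRange m)
        intro i j hij z hz hz'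
        simp only [Function.comp_def, List.mem_append] at hz hz'
        have hsucc : (i.succ : Fin (m+1)) ≠ j.succ := by
          simpa [Fin.succ_inj] using hij
        rcases hz with hz | hz <;> rcases hz' with hz' | hz'
        · exact disjE natAdd_strictMono.injective hsucc hz hz'
        · exact disjNK hz' hz
        · exact disjNK hz hz'
        · exact disjE castAdd_strictMono.injective hsucc hz hz'
    · intro z hz hz'
      obtain ⟨j, hj | hj⟩ := (hmemI z).mp hz
      · exact disjE natAdd_strictMono.injective (Fin.succ_ne_zero j) hj hz'
      · exact disjNK hj hz'
  · intro z hz hz'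
    rw [List.mem_append] at hz'
    rcases hz' with hz' | hz'
    · obtain ⟨j, hj | hj⟩ := (hmemI z).mp hz'
      · exact disjNK hz hj
      · exact disjE castAdd_strictMono.injective (Fin.succ_ne_zero j).symm hz hj
    · exact disjNK hz hz'

end clistSec


/-! ### From lists to permutations -/

section permList
variable {N : ℕ}

noncomputable def permOfList (l : List (Fin N)) (hnd : l.Nodup) (hlen : l.length = N) :
    Equiv.Perm (Fin N) :=
  Equiv.ofBijective (fun i => l.get (Fin.cast hlen.symm i))
    (Finite.injective_iff_bijective.mp (fun a b hab => by
      have h2 := List.nodup_iff_injective_get.mp hnd hab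
      exact Fin.ext (by simpa using congrArg Fin.val h2)))

lemma permOfList_apply (l : List (Fin N)) (hnd : l.Nodup) (hlen : l.length = N) (i : Fin N) :
    permOfList l hnd hlen i = l.get (Fin.cast hlen.symm i) := rfl

lemma ofFn_permOfList (l : List (Fin N)) (hnd : l.Nodup) (hlen : l.length = N) :
    List.ofFn (permOfList l hnd hlen) = l := by
  refine List.ext_getElem (by simp [hlen]) ?_
  intro i h1 h2
  rw [List.getElem_ofFn]
  rfl

end permList

lemma isCallan_iff {n k : ℕ} (π : Equiv.Perm (Fin (n+k))) :
    IsCallan n k π ↔ CallanL n k (List.ofFn ⇑π) := by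
  rw [CallanL]
  refine Iff.trans ?_ List.isChain_iff_getElem.symm
  constructor
  · intro h i hi
    rw [List.getElem_ofFn, List.getElem_ofFn]
    have hi' : i < n + k - 1 := by simp at hi; omega
    exact h ⟨i, hi'⟩
  · intro h i
    have hi' : (i : ℕ) + 1 < (List.ofFn ⇑π).length := by
      have := i.isLt
      simp only [List.length_ofFn]
      omega
    have h2 := h i.1 hi'
    rw [List.getElem_ofFn, List.getElem_ofFn] at h2
    exact h2

/-! ### Nodup facts about a pattern -/

lemma pat_nodup_facts {n k : ℕ} {A0 : LL n k} {ps : List (LL n k × LL n k)} {B0 : LL n k}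
    (hnd : (pat A0 ps B0).Nodup) :
    (A0 :: ps.map Prod.snd).Pairwise List.Disjoint ∧
    (B0 :: ps.map Prod.fst).Pairwise List.Disjoint ∧
    (∀ C ∈ A0 :: ps.map Prod.snd, C.Nodup) ∧
    (∀ C ∈ B0 :: ps.map Prod.fst, C.Nodup) := by
  rw [pat, List.append_assoc, List.nodup_append'] at hnd
  obtain ⟨hA0nd, hrest, hA0disj⟩ := hnd
  rw [List.nodup_append'] at hrest
  obtain ⟨hFnd, hB0nd, hFdisj⟩ := hrest
  rw [List.nodup_flatten] at hFnd
  obtain ⟨hchunknd, hchunkdisj⟩ := hFnd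
  have memflat : ∀ z : Fin (n+k), ∀ p ∈ ps, (z ∈ p.1 ∨ z ∈ p.2) →
      z ∈ (ps.map fun p => p.1 ++ p.2).flatten := by
    intro z p hp hz
    rw [List.mem_flatten]
    exact ⟨p.1 ++ p.2, List.mem_map.mpr ⟨p, hp, rfl⟩, List.mem_append.mpr hz⟩
  have hchunkpair : ps.Pairwise (fun p q => List.Disjoint (p.1 ++ p.2) (q.1 ++ q.2)) :=
    List.pairwise_map.mp hchunkdisj
  refine ⟨?_, ?_, ?_, ?_⟩
  · rw [List.pairwise_cons]
    constructor
    · intro C hC z hzA hzC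
      obtain ⟨p, hp, rfl⟩ := List.mem_map.mp hC
      exact hA0disj hzA (List.mem_append.mpr (Or.inl (memflat z p hp (Or.inr hzC))))
    · rw [List.pairwise_map]
      refine hchunkpair.imp ?_
      intro p q hpq z hz hz'
      exact hpq (List.mem_append_right _ hz) (List.mem_append_right _ hz')
  · rw [List.pairwise_cons]
    constructor
    · intro C hC z hzB hzC
      obtain ⟨p, hp, rfl⟩ := List.mem_map.mp hC
      exact hFdisj (memflat z p hp (Or.inl hzC)) hzB
    · rw [List.pairwise_map]
      refine hchunkpair.imp ?_
      intro p q hpq z hz hz'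
      exact hpq (List.mem_append_left _ hz) (List.mem_append_left _ hz')
  · intro C hC
    rcases List.mem_cons.mp hC with rfl | hC'
    · exact hA0nd
    · obtain ⟨p, hp, rfl⟩ := List.mem_map.mp hC'
      have := hchunknd _ (List.mem_map.mpr ⟨p, hp, rfl⟩)
      exact (List.nodup_append.mp this).2.1
  · intro C hC
    rcases List.mem_cons.mp hC with rfl | hC'
    · exact hB0nd
    · obtain ⟨p, hp, rfl⟩ := List.mem_map.mp hC'
      have := hchunknd _ (List.mem_map.mpr ⟨p, hp, rfl⟩)
      exact (List.nodup_append.mp this).1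

lemma mem_pat_cases {n k : ℕ} {A0 : LL n k} {ps : List (LL n k × LL n k)} {B0 : LL n k}
    {z : Fin (n+k)} (hz : z ∈ pat A0 ps B0) :
    z ∈ A0 ∨ (∃ p ∈ ps, z ∈ p.1 ∨ z ∈ p.2) ∨ z ∈ B0 := by
  rw [pat] at hz
  simp only [List.mem_append, List.mem_flatten, List.mem_map] at hz
  rcases hz with (hz | ⟨c, ⟨p, hp, rfl⟩, hc⟩) | hz
  · exact Or.inl hz
  · exact Or.inr (Or.inl ⟨p, hp, List.mem_append.mp hc⟩)
  · exact Or.inr (Or.inr hz)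

lemma permOfList_eq_of_eq_ofFn {N : ℕ} (l : List (Fin N)) (hnd : l.Nodup) (hlen : l.length = N)
    (π : Equiv.Perm (Fin N)) (h : l = List.ofFn ⇑π) : permOfList l hnd hlen = π := by
  subst h
  refine Equiv.ext (fun i => ?_)
  rw [permOfList_apply, List.get_ofFn]
  exact congrArg π (Fin.ext rfl)

/-! ### The data type and the bijection -/

abbrev Dat (n k : ℕ) :=
  Σ m : Fin (min n k + 1),
    {f : Fin n → Fin (m.1+1) // Hts n m.1 f} × {g : Fin k → Fin (m.1+1) // Hts k m.1 g}

noncomputable def Phi (n k : ℕ) (d : Dat n k) : {π : Equiv.Perm (Fin (n+k)) // IsCallan n k π} :=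
  ⟨permOfList (clist n k d.1.1 d.2.1.1 d.2.2.1) (clist_nodup _ _) (clist_length _ _),
   (isCallan_iff _).mpr (by
      rw [ofFn_permOfList]
      exact good_callan (good_clist d.2.1.2 d.2.2.2))⟩

lemma Phi_inj (n k : ℕ) : Function.Injective (Phi n k) := by
  rintro ⟨m, ⟨f, hf⟩, ⟨g, hg⟩⟩ ⟨m', ⟨f', hf'⟩, ⟨g', hg'⟩⟩ h
  have hl : clist n k m.1 f g = clist n k m'.1 f' g' := by
    have h2 := congrArg (fun p : {π : Equiv.Perm (Fin (n+k)) // IsCallan n k π} =>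
      List.ofFn ⇑(p.1)) h
    simpa only [Phi, ofFn_permOfList] using h2
  obtain ⟨hA, hP, hB⟩ := pat_inj (good_clist hf hg) (good_clist hf' hg') hl
  have hm : m.1 = m'.1 := by
    have h3 := congrArg List.length hP
    simpa [prsL] using h3
  obtain rfl : m = m' := Fin.ext hm
  have hcomp : ∀ j : Fin m.1, (blkE (Fin.natAdd n) g j.succ, blkE (Fin.castAdd k) f j.succ)
      = ((blkE (Fin.natAdd n) g' j.succ : LL n k), (blkE (Fin.castAdd k) f' j.succ : LL n k)) := by
    intro j
    have := (List.map_eq_map_iff).mp hP j (List.mem_finRange j)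
    exact this
  obtain rfl : f = f' := by
    refine blkE_inj (n := n) (k := k) (e := Fin.castAdd k) castAdd_strictMono.injective (fun j => ?_)
    rcases Fin.eq_zero_or_eq_succ j with rfl | ⟨i, rfl⟩
    · exact hA
    · exact congrArg Prod.snd (hcomp i)
  obtain rfl : g = g' := by
    refine blkE_inj (n := n) (k := k) (e := Fin.natAdd n) natAdd_strictMono.injective (fun j => ?_)
    rcases Fin.eq_zero_or_eq_succ j with rfl | ⟨i, rfl⟩
    · exact hB
    · exact congrArg Prod.fst (hcomp i)
  rfl

lemma Phi_surj (n k : ℕ) : Function.Surjective (Phi n k) := by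
  rintro ⟨π, hπ⟩
  have hc : CallanL n k (List.ofFn ⇑π) := (isCallan_iff π).mp hπ
  have hnd : (List.ofFn ⇑π).Nodup := List.nodup_ofFn.mpr π.injective
  have hcompl : ∀ z : Fin (n+k), z ∈ List.ofFn ⇑π :=
    fun z => List.mem_ofFn.mpr ⟨π.symm z, π.apply_symm_apply z⟩
  obtain ⟨A0, ps, B0, hG, hpat⟩ := parse hc
  obtain ⟨hdisjC, hdisjD, hndC, hndD⟩ := pat_nodup_facts (hpat ▸ hnd)
  have hcompat : ∀ z : Fin (n+k), z ∈ pat A0 ps B0 := fun z => hpat ▸ hcompl z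
  set m := ps.length with hm
  have hCslen : (A0 :: ps.map Prod.snd).length = m + 1 := by simp [hm]
  have hDslen : (B0 :: ps.map Prod.fst).length = m + 1 := by simp [hm]
  have CsideN : ∀ C ∈ (A0 :: ps.map Prod.snd), ∀ z ∈ C,
      z ∈ Set.range (Fin.castAdd k : Fin n → Fin (n+k)) := by
    intro C hC z hz
    refine range_castAdd.mpr ?_
    rcases List.mem_cons.mp hC with rfl | hC'
    · exact hG.1.1 z hz
    · obtain ⟨p, hp, rfl⟩ := List.mem_map.mp hC'
      exact (hG.2.1 p hp).2.2.1.1 z hz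
  have DsideK : ∀ C ∈ (B0 :: ps.map Prod.fst), ∀ z ∈ C,
      z ∈ Set.range (Fin.natAdd n : Fin k → Fin (n+k)) := by
    intro C hC z hz
    refine range_natAdd.mpr ?_
    rcases List.mem_cons.mp hC with rfl | hC'
    · exact hG.2.2.1 z hz
    · obtain ⟨p, hp, rfl⟩ := List.mem_map.mp hC'
      exact (hG.2.1 p hp).1.1 z hz
  have hchainC : ∀ C ∈ (A0 :: ps.map Prod.snd), C.Chain' (· < ·) := by
    intro C hC
    rcases List.mem_cons.mp hC with rfl | hC'
    · exact hG.1.2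
    · obtain ⟨p, hp, rfl⟩ := List.mem_map.mp hC'
      exact (hG.2.1 p hp).2.2.1.2
  have hchainD : ∀ C ∈ (B0 :: ps.map Prod.fst), C.Chain' (· < ·) := by
    intro C hC
    rcases List.mem_cons.mp hC with rfl | hC'
    · exact hG.2.2.2
    · obtain ⟨p, hp, rfl⟩ := List.mem_map.mp hC'
      exact (hG.2.1 p hp).1.2
  have hexN : ∀ x : Fin n, ∃ C ∈ A0 :: ps.map Prod.snd, Fin.castAdd k x ∈ C := by
    intro x
    have hxN : (Fin.castAdd k x : Fin (n+k)).1 < n := x.isLt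
    rcases mem_pat_cases (hcompat (Fin.castAdd k x)) with h1 | ⟨p, hp, h2 | h2⟩ | h1
    · exact ⟨A0, List.mem_cons_self, h1⟩
    · exact absurd hxN ((hG.2.1 p hp).1.1 _ h2)
    · exact ⟨p.2, List.mem_cons_of_mem _ (List.mem_map.mpr ⟨p, hp, rfl⟩), h2⟩
    · exact absurd hxN (hG.2.2.1 _ h1)
  have hexK : ∀ y : Fin k, ∃ C ∈ B0 :: ps.map Prod.fst, Fin.natAdd n y ∈ C := by
    intro y
    have hyK : ¬ (Fin.natAdd n y : Fin (n+k)).1 < n := range_natAdd.mp ⟨y, rfl⟩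
    rcases mem_pat_cases (hcompat (Fin.natAdd n y)) with h1 | ⟨p, hp, h2 | h2⟩ | h1
    · exact absurd (hG.1.1 _ h1) hyK
    · exact ⟨p.1, List.mem_cons_of_mem _ (List.mem_map.mpr ⟨p, hp, rfl⟩), h2⟩
    · exact absurd ((hG.2.1 p hp).2.2.1.1 _ h2) hyK
    · exact ⟨B0, List.mem_cons_self, h1⟩
  have hneC : ∀ j : Fin (m+1), j ≠ 0 →
      (A0 :: ps.map Prod.snd)[j.1]'(by rw [hCslen]; exact j.isLt) ≠ [] := by
    intro j hj
    have hj1 : j.1 ≠ 0 := fun h => hj (Fin.ext h)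
    obtain ⟨i, hi⟩ : ∃ i, j.1 = i + 1 := ⟨j.1 - 1, by omega⟩
    have hilt : i < ps.length := by have := j.isLt; omega
    have : (A0 :: ps.map Prod.snd)[j.1]'(by rw [hCslen]; exact j.isLt) = ps[i].2 := by
      simp only [hi, List.getElem_cons_succ, List.getElem_map]
    rw [this]
    exact (hG.2.1 ps[i] (List.getElem_mem _)).2.2.2
  have hneD : ∀ j : Fin (m+1), j ≠ 0 →
      (B0 :: ps.map Prod.fst)[j.1]'(by rw [hDslen]; exact j.isLt) ≠ [] := by
    intro j hj
    have hj1 : j.1 ≠ 0 := fun h => hj (Fin.ext h)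
    obtain ⟨i, hi⟩ : ∃ i, j.1 = i + 1 := ⟨j.1 - 1, by omega⟩
    have hilt : i < ps.length := by have := j.isLt; omega
    have : (B0 :: ps.map Prod.fst)[j.1]'(by rw [hDslen]; exact j.isLt) = ps[i].1 := by
      simp only [hi, List.getElem_cons_succ, List.getElem_map]
    rw [this]
    exact (hG.2.1 ps[i] (List.getElem_mem _)).2.1
  set fOf := idxF (e := Fin.castAdd k) hCslen hexN with hfOf
  set gOf := idxF (e := Fin.natAdd n) hDslen hexK with hgOf
  have hHf : Hts n m fOf := fun j hj => idxF_hts hCslen hexN hdisjC CsideN hneC j hj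
  have hHg : Hts k m gOf := fun j hj => idxF_hts hDslen hexK hdisjD DsideK hneD j hj
  have hmle : m ≤ min n k := le_min hHf.le hHg.le
  have hAr : ∀ j : Fin (m+1), blkE (Fin.castAdd k) fOf j =
      (A0 :: ps.map Prod.snd)[j.1]'(by rw [hCslen]; exact j.isLt) :=
    fun j => blkE_idxF hCslen hexN hdisjC CsideN hndC hchainC castAdd_strictMono j
  have hBr : ∀ j : Fin (m+1), blkE (Fin.natAdd n) gOf j =
      (B0 :: ps.map Prod.fst)[j.1]'(by rw [hDslen]; exact j.isLt) :=
    fun j => blkE_idxF hDslen hexK hdisjD DsideK hndD hchainD natAdd_strictMono j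
  have h1 : blkE (Fin.castAdd k) fOf 0 = A0 := by rw [hAr 0]; rfl
  have h2 : blkE (Fin.natAdd n) gOf 0 = B0 := by rw [hBr 0]; rfl
  have h3 : prsL n k m fOf gOf = ps := by
    refine List.ext_getElem ?_ ?_
    · simp only [prsL, List.length_map, List.length_finRange, hm]
    · intro i hi1 hi2
      have hi : i < m := by omega
      simp only [prsL, List.getElem_map, List.getElem_finRange]
      have hsucc : i + 1 < m + 1 := by omega
      have hjs : (Fin.cast (List.length_finRange (n := m)) (⟨i, by simpa using hi⟩ : Fin ((List.finRange m).length))).succ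
          = (⟨i + 1, hsucc⟩ : Fin (m+1)) := Fin.ext rfl
      rw [hjs, hAr ⟨i+1, hsucc⟩, hBr ⟨i+1, hsucc⟩]
      simp only [List.getElem_cons_succ, List.getElem_map]
  have hclist : clist n k m fOf gOf = pat A0 ps B0 := by
    rw [clist, h1, h2, h3]
  have hfin : clist n k m fOf gOf = List.ofFn ⇑π := hclist.trans hpat.symm
  refine ⟨⟨⟨m, by omega⟩, ⟨fOf, hHf⟩, ⟨gOf, hHg⟩⟩, ?_⟩
  exact Subtype.ext (permOfList_eq_of_eq_ofFn (clist n k m fOf gOf) (clist_nodup fOf gOf) (clist_length fOf gOf) π hfin)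

theorem card_eq (n k : ℕ) :
    Nat.card {π : Equiv.Perm (Fin (n + k)) // IsCallan n k π} =
      ∑ m ∈ Finset.range (min n k + 1),
        (Nat.factorial m) ^ 2 * stirling (n + 1) (m + 1) * stirling (k + 1) (m + 1) := by
  classical
  rw [← Nat.card_eq_of_bijective (Phi n k) ⟨Phi_inj n k, Phi_surj n k⟩]
  rw [Nat.card_eq_fintype_card, Fintype.card_sigma]
  have hterm : ∀ m : Fin (min n k + 1),
      Fintype.card ({f : Fin n → Fin (m.1+1) // Hts n m.1 f} ×
        {g : Fin k → Fin (m.1+1) // Hts k m.1 g}) = SC n m.1 * SC k m.1 := by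
    intro m
    rw [Fintype.card_prod, SC, SC, Nat.card_eq_fintype_card, Nat.card_eq_fintype_card]
  rw [Finset.sum_congr rfl (fun m _ => hterm m)]
  rw [Fin.sum_univ_eq_sum_range (fun m => SC n m * SC k m) (min n k + 1)]
  refine Finset.sum_congr rfl ?_
  intro m _
  rw [SC_eq, SC_eq]
  ring

end CallanAux

theorem card_callan_permutations (n k : ℕ) (hn : 0 < n) (hk : 0 < k) :
    Nat.card {π : Equiv.Perm (Fin (n + k)) // IsCallan n k π} =
      ∑ m ∈ Finset.range (min n k + 1),
        (Nat.factorial m) ^ 2 * stirling (n + 1) (m + 1) * stirling (k + 1) (m + 1) :=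
  CallanAux.card_eq n k
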